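/- For p = 3 and d ≥ 4, the 6×6 matrix F = (d−3)𝟙₆ + [[−L₃, V],[V, −L₃]] (with L₃ the 3×3 cyclic shift matrix and V the 3×3 all-ones matrix) satisfies: the eigenvalues of F†F are d²−5d+7 (multiplicity 4), (d−7)², and (d−1)²; hence for d ≥ 4 the largest singular value of F is d−1. -/

import Mathlib

open Matrix Polynomial

/-- The 3×3 cyclic shift permutation matrix `L₃`. -/
noncomputable def L3 : Matrix (Fin 3) (Fin 3) ℂ :=
  Matrix.of fun i j => if i = j + 1 then 1 else 0

/-- The 3×3 all-ones matrix `V`. -/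
noncomputable def V3 : Matrix (Fin 3) (Fin 3) ℂ :=
  Matrix.of fun _ _ => 1

/-- The 6×6 block matrix `F = (d−3)𝟙₆ + [[−L₃, V],[V, −L₃]]`. -/
noncomputable def Fmat (d : ℕ) : Matrix (Fin 3 ⊕ Fin 3) (Fin 3 ⊕ Fin 3) ℂ :=
  ((d : ℂ) - 3) • 1 + Matrix.fromBlocks (-L3) V3 V3 (-L3)

lemma Fmat_ll (d : ℕ) (i j : Fin 3) :
    Fmat d (Sum.inl i) (Sum.inl j)
      = ((d:ℂ) - 3) * (if i = j then 1 else 0) - (if i = j + 1 then 1 else 0) := by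
  simp [Fmat, L3, Matrix.one_apply]
  split <;> split <;> ring

lemma Fmat_rr (d : ℕ) (i j : Fin 3) :
    Fmat d (Sum.inr i) (Sum.inr j)
      = ((d:ℂ) - 3) * (if i = j then 1 else 0) - (if i = j + 1 then 1 else 0) := by
  simp [Fmat, L3, Matrix.one_apply]
  split <;> split <;> ring

lemma Fmat_lr (d : ℕ) (i j : Fin 3) : Fmat d (Sum.inl i) (Sum.inr j) = 1 := by
  simp [Fmat, V3, Matrix.one_apply]

lemma Fmat_rl (d : ℕ) (i j : Fin 3) : Fmat d (Sum.inr i) (Sum.inl j) = 1 := by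
  simp [Fmat, V3, Matrix.one_apply]

/-- The diagonal block of `FᴴF`. -/
noncomputable def Pm (d : ℕ) : Matrix (Fin 3) (Fin 3) ℂ :=
  Matrix.of fun i j => (if i = j then ((d:ℂ)^2-5*d+7) else 0) + (6 - (d:ℂ))

/-- The off-diagonal block of `FᴴF`. -/
noncomputable def Qm (d : ℕ) : Matrix (Fin 3) (Fin 3) ℂ :=
  Matrix.of fun _ _ => 2*(d:ℂ) - 8

set_option maxHeartbeats 1000000 in
lemma FhF (d : ℕ) : (Fmat d)ᴴ * Fmat d = Matrix.fromBlocks (Pm d) (Qm d) (Qm d) (Pm d) := by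
  ext (i | i) (j | j) <;> fin_cases i <;> fin_cases j <;>
    · simp only [Matrix.mul_apply, Fintype.sum_sum_type, Fin.sum_univ_three,
        Matrix.conjTranspose_apply, Fmat_ll, Fmat_rr, Fmat_lr, Fmat_rl,
        Matrix.fromBlocks_apply₁₁, Matrix.fromBlocks_apply₁₂, Matrix.fromBlocks_apply₂₁,
        Matrix.fromBlocks_apply₂₂, Pm, Qm, Matrix.of_apply, star_sub, star_mul', star_one]
      simp (config := { decide := true }) [Complex.star_def]
      ring

lemma det_fromBlocks_sym {R : Type*} [CommRing R] {n : Type*} [DecidableEq n] [Fintype n]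
    (W Z : Matrix n n R) :
    (Matrix.fromBlocks W Z Z W).det = (W + Z).det * (W - Z).det := by
  have h : Matrix.fromBlocks W Z Z W =
      Matrix.fromBlocks 1 0 1 1 * Matrix.fromBlocks (W + Z) Z 0 (W - Z) *
        Matrix.fromBlocks 1 0 (-1) 1 := by
    simp [Matrix.fromBlocks_multiply, Matrix.fromBlocks_inj]
  rw [h, det_mul, det_mul]
  simp [det_fromBlocks_zero₂₁, det_fromBlocks_zero₁₂]

set_option maxHeartbeats 2000000 in
lemma charpoly_FhF (d : ℕ) :
    ((Fmat d)ᴴ * Fmat d).charpoly =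
        (X - C ((d : ℂ) ^ 2 - 5 * d + 7)) ^ 4 *
          (X - C (((d : ℂ) - 7) ^ 2)) * (X - C (((d : ℂ) - 1) ^ 2)) := by
  rw [FhF, Matrix.charpoly, charmatrix_fromBlocks, det_fromBlocks_sym]
  have e1 : ((1:Fin 3) = 2) = False := by decide
  have e2 : ((2:Fin 3) = 1) = False := by decide
  have e3 : ((2:Fin 3) = 0) = False := by decide
  have e4 : ((0:Fin 3) = 2) = False := by decide
  have e5 : ((0:Fin 3) = 1) = False := by decide
  have e6 : ((1:Fin 3) = 0) = False := by decide
  simp only [Matrix.det_fin_three, Matrix.add_apply, Matrix.sub_apply, Matrix.neg_apply,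
    Matrix.map_apply, charmatrix_apply, Matrix.diagonal_apply, Pm, Qm, Matrix.of_apply,
    e1, e2, e3, e4, e5, e6, if_false, if_true, eq_self_iff_true]
  simp only [map_sub, map_add, _root_.map_mul, map_pow, map_ofNat, _root_.map_one, map_zero]
  ring

set_option maxHeartbeats 1000000 in
lemma key_ineq (d : ℕ) (hd : 4 ≤ d) (v : (Fin 3 ⊕ Fin 3) → ℂ) :
    ∑ i, ‖((Fmat d) *ᵥ v) i‖^2 ≤ ((d:ℝ)-1)^2 * ∑ i, ‖v i‖^2 := by
  have hd2 : (0:ℝ) ≤ (d:ℝ) - 2 := by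
    have : (4:ℝ) ≤ d := by exact_mod_cast hd
    linarith
  have hd4 : (0:ℝ) ≤ (d:ℝ) - 4 := by
    have : (4:ℝ) ≤ d := by exact_mod_cast hd
    linarith
  set a1 := v (Sum.inl 0); set a2 := v (Sum.inl 1); set a3 := v (Sum.inl 2)
  set b1 := v (Sum.inr 0); set b2 := v (Sum.inr 1); set b3 := v (Sum.inr 2)
  simp only [Matrix.mulVec, dotProduct, Fintype.sum_sum_type, Fin.sum_univ_three,
    Fmat_ll, Fmat_lr, Fmat_rl, Fmat_rr]
  simp (config := { decide := true }) only [if_true, if_false, one_mul, mul_one, mul_zero,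
    zero_mul, sub_zero, zero_sub, add_zero, zero_add,
    show ((0:Fin 3) = 1) = False from by decide, show ((0:Fin 3) = 2) = False from by decide,
    show ((1:Fin 3) = 0) = False from by decide, show ((1:Fin 3) = 2) = False from by decide,
    show ((2:Fin 3) = 0) = False from by decide, show ((2:Fin 3) = 1) = False from by decide,
    show ((0:Fin 3) = 0 + 1) = False from by decide, show ((0:Fin 3) = 1 + 1) = False from by decide,
    show ((0:Fin 3) = 2 + 1) = True from by decide, show ((1:Fin 3) = 0 + 1) = True from by decide,
    show ((1:Fin 3) = 1 + 1) = False from by decide, show ((1:Fin 3) = 2 + 1) = False from by decide,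
    show ((2:Fin 3) = 0 + 1) = False from by decide, show ((2:Fin 3) = 1 + 1) = True from by decide,
    show ((2:Fin 3) = 2 + 1) = False from by decide]
  have sos :
      (‖((d:ℂ) - 3) * a1 + -1 * a3 + (b1 + b2 + b3)‖^2
        + ‖-1 * a1 + ((d:ℂ) - 3) * a2 + (b1 + b2 + b3)‖^2
        + ‖-1 * a2 + ((d:ℂ) - 3) * a3 + (b1 + b2 + b3)‖^2
        + ‖a1 + a2 + a3 + (((d:ℂ) - 3) * b1 + -1 * b3)‖^2
        + ‖a1 + a2 + a3 + (-1 * b1 + ((d:ℂ) - 3) * b2)‖^2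
        + ‖a1 + a2 + a3 + (-1 * b2 + ((d:ℂ) - 3) * b3)‖^2)
        + (((d:ℝ)-2) * (‖a1-a2‖^2 + ‖a2-a3‖^2 + ‖a1-a3‖^2
            + ‖b1-b2‖^2 + ‖b2-b3‖^2 + ‖b1-b3‖^2)
          + 2*((d:ℝ)-4) * ‖a1+a2+a3-b1-b2-b3‖^2)
      = ((d:ℝ)-1)^2 * (‖a1‖^2 + ‖a2‖^2 + ‖a3‖^2 + ‖b1‖^2 + ‖b2‖^2 + ‖b3‖^2) := by
    simp only [Complex.sq_norm, Complex.normSq_apply,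
      Complex.add_re, Complex.add_im, Complex.sub_re, Complex.sub_im,
      Complex.mul_re, Complex.mul_im, Complex.natCast_re, Complex.natCast_im,
      Complex.re_ofNat, Complex.im_ofNat, Complex.one_re, Complex.one_im,
      Complex.neg_re, Complex.neg_im]
    ring
  nlinarith [mul_nonneg hd2 (by positivity : (0:ℝ) ≤ ‖a1-a2‖^2 + ‖a2-a3‖^2 + ‖a1-a3‖^2
      + ‖b1-b2‖^2 + ‖b2-b3‖^2 + ‖b1-b3‖^2),
    mul_nonneg hd4 (by positivity : (0:ℝ) ≤ ‖a1+a2+a3-b1-b2-b3‖^2)]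

lemma Fmat_ones (d : ℕ) : Fmat d *ᵥ (fun _ => 1) = fun _ => (d:ℂ) - 1 := by
  funext i
  rcases i with i | i <;> fin_cases i <;>
    · simp only [Matrix.mulVec, dotProduct, Fintype.sum_sum_type, Fin.sum_univ_three,
        Fmat_ll, Fmat_lr, Fmat_rl, Fmat_rr, mul_one]
      simp (config := { decide := true })
      ring

/-- For `d ≥ 4`:  the eigenvalues of `F†F` are `d²−5d+7` (multiplicity 4),
`(d−7)²` and `(d−1)²`; hence the largest singular value of `F` is `d−1`. -/
theorem Fmat_singular_values (d : ℕ) (hd : 4 ≤ d) :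
    ((Fmat d)ᴴ * Fmat d).charpoly =
        (X - C ((d : ℂ) ^ 2 - 5 * d + 7)) ^ 4 *
          (X - C (((d : ℂ) - 7) ^ 2)) * (X - C (((d : ℂ) - 1) ^ 2)) ∧
      ‖Matrix.toEuclideanCLM (𝕜 := ℂ) (Fmat d)‖ = (d : ℝ) - 1 := by
  refine ⟨charpoly_FhF d, ?_⟩
  have hd1 : (0:ℝ) ≤ (d:ℝ) - 1 := by
    have : (4:ℝ) ≤ d := by exact_mod_cast hd
    linarith
  set T := Matrix.toEuclideanCLM (𝕜 := ℂ) (Fmat d) with hT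
  have happly : ∀ w : (Fin 3 ⊕ Fin 3) → ℂ,
      T ((WithLp.equiv 2 _).symm w) = (WithLp.equiv 2 _).symm (Fmat d *ᵥ w) := by
    intro w
    rw [hT]; rfl
  apply le_antisymm
  · apply ContinuousLinearMap.opNorm_le_bound _ hd1
    intro x
    have hx : T x = (WithLp.equiv 2 _).symm (Fmat d *ᵥ (WithLp.equiv 2 _ x)) := by
      rw [← happly, (WithLp.equiv 2 _).symm_apply_apply]
    rw [hx, EuclideanSpace.norm_eq, EuclideanSpace.norm_eq,
      show ((d:ℝ)-1) * √(∑ i, ‖x i‖^2) = √(((d:ℝ)-1)^2 * ∑ i, ‖x i‖^2) by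
        rw [Real.sqrt_mul (by positivity), Real.sqrt_sq hd1]]
    apply Real.sqrt_le_sqrt
    simpa [WithLp.equiv_symm_apply, WithLp.ofLp_toLp] using key_ineq d hd (WithLp.equiv 2 _ x)
  · have h6 : (0:ℝ) < √6 := by positivity
    set u : EuclideanSpace ℂ (Fin 3 ⊕ Fin 3) := (WithLp.equiv 2 _).symm (fun _ => 1) with hu
    have hnu : ‖u‖ = √6 := by
      rw [hu, EuclideanSpace.norm_eq]
      simp [WithLp.equiv_symm_apply, WithLp.ofLp_toLp, Fintype.sum_sum_type, Fin.sum_univ_three]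
    have hTu : ‖T u‖ = ((d:ℝ)-1) * √6 := by
      rw [hu, happly, Fmat_ones, EuclideanSpace.norm_eq]
      have : ‖(d:ℂ) - 1‖ = (d:ℝ) - 1 := by
        rw [show (d:ℂ) - 1 = (((d:ℝ) - 1 : ℝ) : ℂ) by push_cast; ring, Complex.norm_real,
          Real.norm_eq_abs, abs_of_nonneg hd1]
      simp only [WithLp.equiv_symm_apply, WithLp.ofLp_toLp, Fintype.sum_sum_type, Fin.sum_univ_three, this]
      rw [show ((d:ℝ)-1)^2 + ((d:ℝ)-1)^2 + ((d:ℝ)-1)^2 + (((d:ℝ)-1)^2 + ((d:ℝ)-1)^2 + ((d:ℝ)-1)^2)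
          = ((d:ℝ)-1)^2 * 6 by ring, Real.sqrt_mul (by positivity), Real.sqrt_sq hd1]
    have hle := T.le_opNorm u
    rw [hTu, hnu] at hle
    exact le_of_mul_le_mul_right hle h6
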